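/- For the Perceptron algorithm run on examples (z_j, y_j) with ‖z_j‖ ≤ R, for any weight vector w*, the number of mistakes is at most R²‖w*‖² + 2·Σ_j max{0, 1 − y_j⟨z_j, w*⟩}. -/

import Mathlib

/-- Non-separable Perceptron mistake bound (Block, 1962): running the Perceptron on
examples `(z j, y j)` with `‖z j‖ ≤ R` and labels `y j ∈ {−1, +1}` (starting at
`w 0 = 0`, updating `w (j+1) = w j + y j • z j` exactly on mistakes, where a
mistake at step `j` means `y j ⟪w j, z j⟫ ≤ 0`), for any comparator `w*` the number
of mistakes among the first `n` steps is at most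
`R² ‖w*‖² + 2 Σ_j max {0, 1 − y j ⟪z j, w*⟫}`. -/
theorem perceptron_hinge_loss_bound
    {E : Type*} [NormedAddCommGroup E] [InnerProductSpace ℝ E]
    (z : ℕ → E) (y : ℕ → ℝ) (R : ℝ) (n : ℕ) (w : ℕ → E) (wstar : E)
    (hz : ∀ j, ‖z j‖ ≤ R)
    (hy : ∀ j, y j = 1 ∨ y j = -1)
    (hw0 : w 0 = 0)
    (hupd : ∀ j, w (j + 1) =
      if y j * (inner ℝ (w j) (z j) : ℝ) ≤ 0 then w j + y j • z j else w j) :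
    (((Finset.range n).filter (fun j => y j * (inner ℝ (w j) (z j) : ℝ) ≤ 0)).card : ℝ)
      ≤ R ^ 2 * ‖wstar‖ ^ 2 +
        2 * ∑ j ∈ Finset.range n, max 0 (1 - y j * (inner ℝ (z j) wstar : ℝ)) := by
  have hR : 0 ≤ R := le_trans (norm_nonneg _) (hz 0)
  set M : ℕ → ℕ := fun m =>
    ((Finset.range m).filter (fun j => y j * (inner ℝ (w j) (z j) : ℝ) ≤ 0)).card with hMdef
  set L : ℕ → ℝ := fun m =>
    ∑ j ∈ Finset.range m, max 0 (1 - y j * (inner ℝ (z j) wstar : ℝ)) with hLdef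
  have key : ∀ m, ‖w m‖ ^ 2 ≤ (M m : ℝ) * R ^ 2 ∧
      (M m : ℝ) - L m ≤ (inner ℝ (w m) wstar : ℝ) := by
    intro m
    induction m with
    | zero => simp [hMdef, hLdef, hw0]
    | succ m ih =>
      obtain ⟨ih1, ih2⟩ := ih
      have hLs : L (m + 1) = L m + max 0 (1 - y m * (inner ℝ (z m) wstar : ℝ)) :=
        Finset.sum_range_succ _ _
      have hLmono : L m ≤ L (m + 1) := by
        rw [hLs]; nlinarith [le_max_left (0:ℝ) (1 - y m * (inner ℝ (z m) wstar : ℝ))]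
      by_cases h : y m * (inner ℝ (w m) (z m) : ℝ) ≤ 0
      · have hMs : (M (m + 1) : ℝ) = (M m : ℝ) + 1 := by
          have : M (m + 1) = M m + 1 := by
            simp only [hMdef, Finset.range_add_one, Finset.filter_insert, if_pos h]
            rw [Finset.card_insert_of_notMem (by simp)]
          rw [this]; push_cast; ring
        have hws : w (m + 1) = w m + y m • z m := by rw [hupd m, if_pos h]
        have hy2 : y m ^ 2 = 1 := by rcases hy m with h' | h' <;> rw [h'] <;> norm_num
        have hz2 : ‖z m‖ ^ 2 ≤ R ^ 2 := by
          nlinarith [hz m, norm_nonneg (z m)]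
        constructor
        · have hexp : ‖w (m + 1)‖ ^ 2
              = ‖w m‖ ^ 2 + 2 * (y m * (inner ℝ (w m) (z m) : ℝ)) + y m ^ 2 * ‖z m‖ ^ 2 := by
            rw [hws, @norm_add_sq_real, real_inner_smul_right, norm_smul]
            simp [mul_pow, abs_mul_abs_self, sq_abs]
          rw [hexp, hMs, hy2]
          nlinarith
        · have hinner : (inner ℝ (w (m + 1)) wstar : ℝ)
              = (inner ℝ (w m) wstar : ℝ) + y m * (inner ℝ (z m) wstar : ℝ) := by
            rw [hws, inner_add_left, real_inner_smul_left]
          have hhinge : 1 - y m * (inner ℝ (z m) wstar : ℝ)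
              ≤ max 0 (1 - y m * (inner ℝ (z m) wstar : ℝ)) := le_max_right _ _
          rw [hinner, hMs, hLs]; linarith
      · have hMs : M (m + 1) = M m := by
          simp only [hMdef, Finset.range_add_one, Finset.filter_insert, if_neg h]
        have hws : w (m + 1) = w m := by rw [hupd m, if_neg h]
        rw [hws, hMs]
        exact ⟨ih1, by linarith⟩
  obtain ⟨h1, h2⟩ := key n
  have hcs : (inner ℝ (w n) wstar : ℝ) ≤ ‖w n‖ * ‖wstar‖ := real_inner_le_norm _ _
  have hMn : (0:ℝ) ≤ (M n : ℝ) := Nat.cast_nonneg _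
  have hwle : ‖w n‖ ≤ Real.sqrt (M n) * R := by
    have : ‖w n‖ ≤ Real.sqrt ((M n : ℝ) * R ^ 2) := by
      rw [← Real.sqrt_sq (norm_nonneg (w n))]
      exact Real.sqrt_le_sqrt h1
    rwa [Real.sqrt_mul hMn, Real.sqrt_sq hR] at this
  have hsq : Real.sqrt (M n) ^ 2 = (M n : ℝ) := Real.sq_sqrt hMn
  have hamgm : Real.sqrt (M n) * (R * ‖wstar‖)
      ≤ ((M n : ℝ) + (R * ‖wstar‖) ^ 2) / 2 := by
    nlinarith [sq_nonneg (Real.sqrt (M n) - R * ‖wstar‖)]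
  have hchain : (M n : ℝ) - L n ≤ ((M n : ℝ) + (R * ‖wstar‖) ^ 2) / 2 := by
    have h3 : ‖w n‖ * ‖wstar‖ ≤ Real.sqrt (M n) * (R * ‖wstar‖) := by
      have := mul_le_mul_of_nonneg_right hwle (norm_nonneg wstar)
      linarith [this]
    linarith
  have : (M n : ℝ) ≤ R ^ 2 * ‖wstar‖ ^ 2 + 2 * L n := by nlinarith
  simpa [hMdef, hLdef] using this
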